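/- arXiv:1601.02242 — 8 statements merged into one kernel-verified Lean document; each statement's English description precedes it below -/
import Mathlib

section
/- Let C₀ > 0. Suppose K : 𝕋 × 𝕋 → ℂ is measurable on 𝕋 × 𝕋 ∖ {(w,w) : w ∈ 𝕋} and satisfies |K(w,τ)| ≤ C₀ for all w ≠ τ in 𝕋; suppose moreover that for each fixed τ ∈ 𝕋 the map θ ↦ K(e^{iθ}, τ) is differentiable at every θ with e^{iθ} ≠ τ, with derivative bounded by C₀/|e^{iθ}−τ|. Then for every β ∈ (0,1) there is a constant C_β depending only on β such that for every bounded measurable f : 𝕋 → ℂ, the function 𝒯f(w) = (1/(2πi)) ∫_{𝕋} K(w,τ) f(τ) dτ satisfies sup_{w∈𝕋} |𝒯f(w)| ≤ C_β C₀ ‖f‖_{L^∞(𝕋)} and |𝒯f(w₁) − 𝒯f(w₂)| ≤ C_β C₀ ‖f‖_{L^∞(𝕋)} |w₁ − w₂|^{β} for all w₁, w₂ ∈ 𝕋. -/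
open MeasureTheory Set
open scoped Real

private lemma expI_norm (θ : ℝ) : ‖Complex.exp (θ * Complex.I)‖ = 1 :=
  Complex.norm_exp_ofReal_mul_I θ

private lemma norm_expI_sub_one (t : ℝ) :
    ‖Complex.exp (t * Complex.I) - 1‖ = 2 * |Real.sin (t / 2)| := by
  have key : ∀ x : ℂ, Complex.exp (x * Complex.I) - Complex.exp (-x * Complex.I) =
      2 * Complex.sin x * Complex.I := by
    intro x
    rw [Complex.sin]
    field_simp
    ring_nf
    rw [Complex.I_sq]
    ring
  have hsplit : Complex.exp (t * Complex.I) - 1 =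
      Complex.exp ((t/2 : ℝ) * Complex.I) * (2 * Complex.sin ((t/2 : ℝ)) * Complex.I) := by
    rw [← key ((t/2 : ℝ))]
    rw [mul_sub, ← Complex.exp_add, ← Complex.exp_add]
    push_cast
    ring_nf
    rw [Complex.exp_zero]
    ring
  rw [hsplit, norm_mul, expI_norm, one_mul, ← Complex.ofReal_sin]
  rw [norm_mul, norm_mul, Complex.norm_I, Complex.norm_real]
  simp [Real.norm_eq_abs]

private lemma norm_expI_sub (s t : ℝ) :
    ‖Complex.exp (s * Complex.I) - Complex.exp (t * Complex.I)‖ = 2 * |Real.sin ((s - t) / 2)| := by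
  have h : Complex.exp (s * Complex.I) - Complex.exp (t * Complex.I) =
      Complex.exp (t * Complex.I) * (Complex.exp ((s - t : ℝ) * Complex.I) - 1) := by
    rw [mul_sub, ← Complex.exp_add, mul_one]
    push_cast
    ring_nf
  rw [h, norm_mul, expI_norm, one_mul, norm_expI_sub_one]

private lemma abs_sin_le_abs (x : ℝ) : |Real.sin x| ≤ |x| := by
  have key : ∀ y : ℝ, 0 ≤ y → |Real.sin y| ≤ |y| := by
    intro y hy
    rcases le_or_gt y 1 with h1 | h1
    · rw [_root_.abs_of_nonneg hy,
        _root_.abs_of_nonneg (Real.sin_nonneg_of_nonneg_of_le_pi hy (by linarith [Real.pi_gt_three]))]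
      exact Real.sin_le hy
    · calc |Real.sin y| ≤ 1 := Real.abs_sin_le_one y
        _ ≤ |y| := by rw [_root_.abs_of_nonneg hy]; linarith
  rcases le_or_gt 0 x with h | h
  · exact key x h
  · have := key (-x) (by linarith)
    rwa [Real.sin_neg, abs_neg, abs_neg] at this

private lemma chord_le (s t : ℝ) :
    ‖Complex.exp (s * Complex.I) - Complex.exp (t * Complex.I)‖ ≤ |s - t| := by
  rw [norm_expI_sub]
  have h := abs_sin_le_abs ((s - t) / 2)
  rw [abs_div, _root_.abs_two] at h
  linarith

private lemma chord_ge (s t : ℝ) (h : |s - t| ≤ π) :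
    2 / π * |s - t| ≤ ‖Complex.exp (s * Complex.I) - Complex.exp (t * Complex.I)‖ := by
  rw [norm_expI_sub]
  set u := (s - t) / 2 with hu
  have hau : |u| = |s - t| / 2 := by rw [hu, abs_div, _root_.abs_two]
  have hu2 : |u| ≤ π / 2 := by rw [hau]; linarith
  have key : 2 / π * |u| ≤ Real.sin |u| := Real.mul_le_sin (abs_nonneg u) hu2
  have h2 : Real.sin |u| ≤ |Real.sin u| := by
    rcases le_or_gt 0 u with h' | h'
    · rw [_root_.abs_of_nonneg h']; exact le_abs_self _
    · rw [abs_of_neg h', Real.sin_neg]; exact neg_le_abs _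
  have hπ := Real.pi_pos
  have h3 : 2 / π * |s - t| = 2 * (2 / π * |u|) := by rw [hau]; ring
  linarith

private lemma countable_expI_eq (w : ℂ) :
    Set.Countable {φ : ℝ | Complex.exp (φ * Complex.I) = w} := by
  rcases Set.eq_empty_or_nonempty {φ : ℝ | Complex.exp (φ * Complex.I) = w} with h | ⟨θ₀, hθ₀⟩
  · simp [h]
  · apply Set.Countable.mono ?_ (Set.countable_range fun n : ℤ => θ₀ + n * (2 * π))
    intro φ hφ
    have he : Complex.exp (φ * Complex.I) = Complex.exp (θ₀ * Complex.I) := by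
      rw [hφ, hθ₀]
    rw [Complex.exp_eq_exp_iff_exists_int] at he
    obtain ⟨n, hn⟩ := he
    refine ⟨n, ?_⟩
    have h2 : (φ : ℂ) * Complex.I = ((θ₀ : ℂ) + (n : ℂ) * (2 * (π : ℂ))) * Complex.I := by
      rw [hn]; ring
    have h3 : (φ : ℂ) = (θ₀ : ℂ) + (n : ℂ) * (2 * (π : ℂ)) := mul_right_cancel₀ Complex.I_ne_zero h2
    exact_mod_cast h3.symm

noncomputable def circAvg (g : ℂ → ℂ) : ℂ :=
  (2 * (Real.pi : ℂ) * Complex.I)⁻¹ * ∮ τ in C(0, 1), g τ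

set_option maxHeartbeats 1600000 in
theorem stmt1 (β : ℝ) (hβ0 : 0 < β) (hβ1 : β < 1) :
    ∃ Cβ : ℝ, 0 < Cβ ∧
      ∀ (C₀ : ℝ), 0 < C₀ → ∀ (K : ℂ → ℂ → ℂ),
        Measurable (({p : ℂ × ℂ | ‖p.1‖ = 1 ∧ ‖p.2‖ = 1 ∧ p.1 ≠ p.2}).restrict
          fun p : ℂ × ℂ => K p.1 p.2) →
        (∀ w τ : ℂ, ‖w‖ = 1 → ‖τ‖ = 1 → w ≠ τ → ‖K w τ‖ ≤ C₀) →
        (∀ τ : ℂ, ‖τ‖ = 1 → ∀ θ : ℝ, Complex.exp (θ * Complex.I) ≠ τ →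
          ∃ d : ℂ, HasDerivAt (fun s : ℝ => K (Complex.exp (s * Complex.I)) τ) d θ ∧
            ‖d‖ ≤ C₀ / ‖Complex.exp (θ * Complex.I) - τ‖) →
        ∀ (f : ℂ → ℂ) (M : ℝ), Measurable f → (∀ τ : ℂ, ‖τ‖ = 1 → ‖f τ‖ ≤ M) →
          (∀ w : ℂ, ‖w‖ = 1 →
            ‖circAvg (fun τ => K w τ * f τ)‖ ≤ Cβ * C₀ * M) ∧
          (∀ w₁ w₂ : ℂ, ‖w₁‖ = 1 → ‖w₂‖ = 1 →
            ‖circAvg (fun τ => K w₁ τ * f τ) - circAvg (fun τ => K w₂ τ * f τ)‖ ≤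
              Cβ * C₀ * M * ‖w₁ - w₂‖ ^ β) := by
  have hπ := Real.pi_pos
  set A : ℝ := (π ^ 2 / 2) ^ β * (2 * π ^ (1 - β) / (1 - β)) with hA
  have hA0 : 0 ≤ A := by
    rw [hA]
    have h1 : (0:ℝ) ≤ (π ^ 2 / 2) ^ β := Real.rpow_nonneg (by positivity) _
    have h2 : (0:ℝ) ≤ π ^ (1 - β) := Real.rpow_nonneg (by positivity) _
    have h3 : (0:ℝ) < 1 - β := by linarith
    positivity
  refine ⟨1 + A / π, by positivity, ?_⟩
  intro C₀ hC₀ K hKmeas hKbd hKder f M hf hfM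
  have hM : 0 ≤ M := le_trans (norm_nonneg _) (hfM 1 (by simp))
  -- measurable extension of K
  set S : Set (ℂ × ℂ) := {p : ℂ × ℂ | ‖p.1‖ = 1 ∧ ‖p.2‖ = 1 ∧ p.1 ≠ p.2} with hS
  have hSm : MeasurableSet S := by
    have : S = ((fun p : ℂ × ℂ => ‖p.1‖) ⁻¹' {1}) ∩
        (((fun p : ℂ × ℂ => ‖p.2‖) ⁻¹' {1}) ∩ {p : ℂ × ℂ | p.1 = p.2}ᶜ) := rfl
    rw [this]
    exact ((measurable_fst.norm) (measurableSet_singleton 1)).inter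
      (((measurable_snd.norm) (measurableSet_singleton 1)).inter
        (isClosed_eq continuous_fst continuous_snd).measurableSet.compl)
  set E : ℂ × ℂ → ℂ :=
    Function.extend (Subtype.val : S → ℂ × ℂ) (S.restrict fun p : ℂ × ℂ => K p.1 p.2)
      (fun _ => 0) with hE
  have hEm : Measurable E :=
    (MeasurableEmbedding.subtype_coe hSm).measurable_extend hKmeas measurable_const
  have hEeq : ∀ p : ℂ × ℂ, p ∈ S → E p = K p.1 p.2 := by
    intro p hp
    have := Subtype.coe_injective.extend_apply
      (S.restrict fun p : ℂ × ℂ => K p.1 p.2) (fun _ => 0) (⟨p, hp⟩ : S)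
    exact this
  have hEbd : ∀ p : ℂ × ℂ, ‖E p‖ ≤ C₀ := by
    intro p
    by_cases hp : p ∈ S
    · rw [hEeq p hp]; exact hKbd _ _ hp.1 hp.2.1 hp.2.2
    · rw [hE, Function.extend_apply' _ _ _ (by rintro ⟨a, rfl⟩; exact hp a.2)]
      simpa using hC₀.le
  -- the parametrized integrand
  set G : ℂ → ℝ → ℂ := fun w φ => Complex.exp (φ * Complex.I) * Complex.I *
    (E (w, Complex.exp (φ * Complex.I)) * f (Complex.exp (φ * Complex.I))) with hG
  have he : Measurable fun φ : ℝ => Complex.exp (φ * Complex.I) :=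
    (Complex.continuous_exp.comp (Complex.continuous_ofReal.mul continuous_const)).measurable
  have hGm : ∀ w, Measurable (G w) := by
    intro w
    exact ((he.mul measurable_const).mul
      ((hEm.comp (measurable_const.prodMk he)).mul (hf.comp he)))
  have hGbd : ∀ w φ, ‖G w φ‖ ≤ C₀ * M := by
    intro w φ
    rw [hG]
    simp only [norm_mul, expI_norm, Complex.norm_I, one_mul, mul_one]
    exact mul_le_mul (hEbd _) (hfM _ (expI_norm φ)) (norm_nonneg _) hC₀.le
  have hGper : ∀ w, Function.Periodic (G w) (2 * π) := by
    intro w φ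
    have : Complex.exp ((φ + 2 * π : ℝ) * Complex.I) = Complex.exp (φ * Complex.I) := by
      push_cast
      rw [add_mul, Complex.exp_add, Complex.exp_two_pi_mul_I, mul_one]
    simp only [hG, this]
  have hGint : ∀ w a b, IntervalIntegrable (G w) volume a b := by
    intro w a b
    rw [intervalIntegrable_iff]
    exact Integrable.mono' (integrableOn_const measure_Ioc_lt_top.ne)
      ((hGm w).aestronglyMeasurable.restrict) (ae_of_all _ (hGbd w))
  -- reduction of circAvg to G
  have hCA : ∀ w : ℂ, ‖w‖ = 1 → circAvg (fun τ => K w τ * f τ) =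
      (2 * (π : ℂ) * Complex.I)⁻¹ * ∫ φ in (0:ℝ)..2 * π, G w φ := by
    intro w hw
    have hnull : (volume {φ : ℝ | ¬Complex.exp (φ * Complex.I) ≠ w}) = 0 := by
      have : {φ : ℝ | ¬Complex.exp (φ * Complex.I) ≠ w} =
          {φ : ℝ | Complex.exp (φ * Complex.I) = w} := by simp
      rw [this]
      exact (countable_expI_eq w).measure_zero volume
    have hne : ∀ᵐ φ : ℝ, Complex.exp (φ * Complex.I) ≠ w := by
      rw [ae_iff]; exact hnull
    have : (∮ τ in C(0, 1), K w τ * f τ) = ∫ φ in (0:ℝ)..2 * π, G w φ := by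
      rw [circleIntegral]
      refine intervalIntegral.integral_congr_ae ?_
      filter_upwards [hne] with φ hφ _
      have hcm : circleMap 0 1 φ = Complex.exp (φ * Complex.I) := by simp [circleMap]
      rw [deriv_circleMap, hcm, smul_eq_mul]
      simp only [hG]
      rw [hEeq (w, Complex.exp (φ * Complex.I)) ⟨hw, expI_norm φ, Ne.symm hφ⟩]
    rw [circAvg, this]
  have hc : ‖(2 * (π : ℂ) * Complex.I)⁻¹‖ = (2 * π)⁻¹ := by
    rw [norm_inv, norm_mul, norm_mul, Complex.norm_I, mul_one, Complex.norm_real]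
    simp [Real.norm_eq_abs, _root_.abs_of_pos hπ]
  constructor
  · -- sup bound
    intro w hw
    rw [hCA w hw, norm_mul, hc]
    have h1 : ‖∫ φ in (0:ℝ)..2 * π, G w φ‖ ≤ C₀ * M * |2 * π - 0| :=
      intervalIntegral.norm_integral_le_of_norm_le_const (fun φ _ => hGbd w φ)
    have h2 : |2 * π - 0| = 2 * π := by rw [sub_zero, _root_.abs_of_pos (by positivity)]
    rw [h2] at h1
    calc (2 * π)⁻¹ * ‖∫ φ in (0:ℝ)..2 * π, G w φ‖ ≤ (2 * π)⁻¹ * (C₀ * M * (2 * π)) := by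
          exact mul_le_mul_of_nonneg_left h1 (by positivity)
      _ = C₀ * M := by field_simp
      _ ≤ (1 + A / π) * C₀ * M := by nlinarith [mul_nonneg hC₀.le hM, div_nonneg hA0 hπ.le]
  · -- Hölder bound
    intro w₁ w₂ hw₁ hw₂
    by_cases hne : w₁ = w₂
    · subst hne
      simp [sub_self, Real.zero_rpow hβ0.ne']
    -- nontrivial case
    set δ : ℝ := ‖w₁ - w₂‖ with hδ
    have hδ0 : 0 < δ := by rw [hδ, norm_pos_iff, sub_ne_zero]; exact hne
    -- choose angles
    have habs1 : ‖w₁‖ = 1 := hw₁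
    have habs2 : ‖w₂‖ = 1 := hw₂
    set θ₁ : ℝ := Complex.arg w₁ with hθ₁
    have hw1e : Complex.exp (θ₁ * Complex.I) = w₁ := by
      conv_rhs => rw [← Complex.norm_mul_exp_arg_mul_I w₁]
      rw [habs1, Complex.ofReal_one, one_mul]
    obtain ⟨θ₂, hw2e, hθd⟩ : ∃ θ₂ : ℝ, Complex.exp (θ₂ * Complex.I) = w₂ ∧ |θ₁ - θ₂| ≤ π := by
      have h2 : Complex.exp (Complex.arg w₂ * Complex.I) = w₂ := by
        conv_rhs => rw [← Complex.norm_mul_exp_arg_mul_I w₂]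
        rw [habs2, Complex.ofReal_one, one_mul]
      set s : ℝ := Complex.arg w₂ with hs
      have h1a : -π < θ₁ := Complex.neg_pi_lt_arg w₁
      have h1b : θ₁ ≤ π := Complex.arg_le_pi w₁
      have h2a : -π < s := Complex.neg_pi_lt_arg w₂
      have h2b : s ≤ π := Complex.arg_le_pi w₂
      rcases le_or_gt (θ₁ - s) π with h | h
      · rcases le_or_gt (-π) (θ₁ - s) with h' | h'
        · exact ⟨s, h2, abs_le.2 ⟨h', h⟩⟩
        · refine ⟨s - 2 * π, ?_, abs_le.2 ⟨by linarith, by linarith⟩⟩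
          rw [show ((s - 2 * π : ℝ) : ℂ) * Complex.I = s * Complex.I - 2 * π * Complex.I by
            push_cast; ring]
          rw [Complex.exp_sub, Complex.exp_two_pi_mul_I, div_one, h2]
      · refine ⟨s + 2 * π, ?_, abs_le.2 ⟨by linarith, by linarith⟩⟩
        rw [show ((s + 2 * π : ℝ) : ℂ) * Complex.I = s * Complex.I + 2 * π * Complex.I by
          push_cast; ring]
        rw [Complex.exp_add, Complex.exp_two_pi_mul_I, mul_one, h2]
    have harc : |θ₁ - θ₂| ≤ π / 2 * δ := by
      have hch : 2 / π * |θ₁ - θ₂| ≤ δ := by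
        have := chord_ge θ₁ θ₂ hθd
        rwa [hw1e, hw2e, ← hδ] at this
      have := mul_le_mul_of_nonneg_left hch (by positivity : (0:ℝ) ≤ π / 2)
      rwa [show π / 2 * (2 / π * |θ₁ - θ₂|) = |θ₁ - θ₂| by field_simp] at this
    set a : ℝ := θ₁ - π with ha
    set b : ℝ := θ₁ + π with hb
    have hab : a ≤ b := by rw [ha, hb]; linarith
    set Hc : ℝ := 2 * C₀ * M * ((π ^ 2 * δ / 2) ^ β) with hHc
    have hrp : (0:ℝ) < π ^ 2 * δ / 2 := by positivity
    have hHc0 : 0 ≤ Hc := by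
      rw [hHc]
      have := Real.rpow_nonneg hrp.le β
      positivity
    -- pointwise key estimate
    have key : ∀ φ : ℝ, φ ∈ Set.Ioc a b → Complex.exp (φ * Complex.I) ≠ w₁ →
        Complex.exp (φ * Complex.I) ≠ w₂ →
        ‖G w₁ φ - G w₂ φ‖ ≤ Hc * |φ - θ₁| ^ (-β) := by
      intro φ hφIoc hne1 hne2
      set τ : ℂ := Complex.exp (φ * Complex.I) with hτ
      have hτ1 : ‖τ‖ = 1 := expI_norm φ
      have hfτ : ‖f τ‖ ≤ M := hfM τ hτ1
      have hφa : |φ - θ₁| ≤ π := by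
        rw [abs_le]
        constructor
        · have := hφIoc.1; rw [ha] at this; linarith
        · have := hφIoc.2; rw [hb] at this; linarith
      have hφθ : φ ≠ θ₁ := by
        intro h
        exact hne1 (by rw [hτ, h, hw1e])
      have habs0 : 0 < |φ - θ₁| := abs_pos.2 (sub_ne_zero.2 hφθ)
      have hlow : 2 / π * |φ - θ₁| ≤ ‖τ - w₁‖ := by
        rw [hτ, ← hw1e]; exact chord_ge φ θ₁ hφa
      have hτw₁pos : 0 < ‖τ - w₁‖ := lt_of_lt_of_le (by positivity) hlow
      -- difference of G values
      have hGdiff : G w₁ φ - G w₂ φ =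
          Complex.exp (φ * Complex.I) * Complex.I * ((K w₁ τ - K w₂ τ) * f τ) := by
        simp only [hG]
        rw [hEeq (w₁, τ) ⟨hw₁, hτ1, Ne.symm hne1⟩, hEeq (w₂, τ) ⟨hw₂, hτ1, Ne.symm hne2⟩]
        ring
      rw [hGdiff, norm_mul, norm_mul, norm_mul, Complex.norm_I, ← hτ, hτ1]
      simp only [one_mul, mul_one]
      -- reduce to bound on K difference
      have hlow' : 2 * |φ - θ₁| ≤ π * ‖τ - w₁‖ := by
        have h6 := mul_le_mul_of_nonneg_left hlow hπ.le
        rw [show π * (2 / π * |φ - θ₁|) = 2 * |φ - θ₁| by field_simp] at h6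
        exact h6
      have hRge : π * δ / ‖τ - w₁‖ ≤ (π ^ 2 * δ / 2) / |φ - θ₁| := by
        rw [div_le_div_iff₀ hτw₁pos habs0]
        have h6 := mul_le_mul_of_nonneg_left hlow' (by positivity : (0:ℝ) ≤ π * δ / 2)
        ring_nf at h6 ⊢
        linarith
      have hKdiff : ‖K w₁ τ - K w₂ τ‖ ≤ 2 * C₀ * (((π ^ 2 * δ / 2) / |φ - θ₁|) ^ β) := by
        by_cases hcase : π * δ ≤ ‖τ - w₁‖
        · -- far case: mean value theorem
          choose! d hd hdb using hKder τ hτ1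
          have harcpt : ∀ θ ∈ Set.uIcc θ₁ θ₂,
              ‖τ - w₁‖ / 2 ≤ ‖Complex.exp (θ * Complex.I) - τ‖ ∧
                Complex.exp (θ * Complex.I) ≠ τ := by
            intro θ hθ
            have h1 : ‖Complex.exp (θ * Complex.I) - w₁‖ ≤ |θ - θ₁| := by
              rw [← hw1e]; exact chord_le θ θ₁
            have h2 : |θ - θ₁| ≤ |θ₂ - θ₁| := by
              rcases Set.mem_uIcc.mp hθ with ⟨hl, hr⟩ | ⟨hl, hr⟩ <;> rw [abs_le] <;>
                constructor <;>
                linarith [le_abs_self (θ₂ - θ₁), neg_abs_le (θ₂ - θ₁), abs_nonneg (θ₂ - θ₁)]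
            have h3 : |θ₂ - θ₁| ≤ π / 2 * δ := by rw [abs_sub_comm]; exact harc
            have h4 : ‖τ - w₁‖ ≤ ‖Complex.exp (θ * Complex.I) - τ‖ +
                ‖Complex.exp (θ * Complex.I) - w₁‖ := by
              have htri := norm_sub_le (τ - Complex.exp (θ * Complex.I))
                (w₁ - Complex.exp (θ * Complex.I))
              rw [show τ - Complex.exp (θ * Complex.I) - (w₁ - Complex.exp (θ * Complex.I)) =
                  τ - w₁ by ring] at htri
              rw [norm_sub_rev (Complex.exp (θ * Complex.I)) τ,
                norm_sub_rev (Complex.exp (θ * Complex.I)) w₁]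
              exact htri
            have h5 : ‖τ - w₁‖ / 2 ≤ ‖Complex.exp (θ * Complex.I) - τ‖ := by linarith
            refine ⟨h5, fun hcontra => ?_⟩
            rw [hcontra, sub_self, norm_zero] at h5
            linarith
          have hder : ∀ θ ∈ Set.uIcc θ₁ θ₂,
              HasDerivWithinAt (fun s : ℝ => K (Complex.exp (s * Complex.I)) τ) (d θ)
                (Set.uIcc θ₁ θ₂) θ :=
            fun θ hθ => (hd θ (harcpt θ hθ).2).hasDerivWithinAt
          have hbd : ∀ θ ∈ Set.uIcc θ₁ θ₂, ‖d θ‖ ≤ 2 * C₀ / ‖τ - w₁‖ := by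
            intro θ hθ
            refine (hdb θ (harcpt θ hθ).2).trans ?_
            have h5 := (harcpt θ hθ).1
            have := div_le_div_of_nonneg_left hC₀.le (by linarith : 0 < ‖τ - w₁‖ / 2) h5
            calc C₀ / ‖Complex.exp (θ * Complex.I) - τ‖ ≤ C₀ / (‖τ - w₁‖ / 2) := this
              _ = 2 * C₀ / ‖τ - w₁‖ := by rw [div_div_eq_mul_div]; ring
          have hmvt := (convex_uIcc θ₁ θ₂).norm_image_sub_le_of_norm_hasDerivWithin_le
            hder hbd Set.left_mem_uIcc Set.right_mem_uIcc
          simp only [hw1e, hw2e] at hmvt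
          rw [norm_sub_rev] at hmvt
          -- hmvt : ‖K w₁ τ - K w₂ τ‖ ≤ 2*C₀/‖τ-w₁‖ * ‖θ₂ - θ₁‖
          set x : ℝ := π * δ / ‖τ - w₁‖ with hx
          have hx0 : 0 < x := by rw [hx]; positivity
          have hx1 : x ≤ 1 := by rw [hx, div_le_one hτw₁pos]; exact hcase
          have hxle : x ≤ x ^ β := by
            have := Real.rpow_le_rpow_of_exponent_ge hx0 hx1 hβ1.le
            rwa [Real.rpow_one] at this
          have hstep : ‖K w₁ τ - K w₂ τ‖ ≤ C₀ * x := by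
            have hnn : ‖θ₂ - θ₁‖ ≤ π / 2 * δ := by
              rw [Real.norm_eq_abs, abs_sub_comm]; exact harc
            have := hmvt.trans (mul_le_mul_of_nonneg_left hnn (by positivity))
            calc ‖K w₁ τ - K w₂ τ‖ ≤ 2 * C₀ / ‖τ - w₁‖ * (π / 2 * δ) := this
              _ = C₀ * x := by rw [hx]; field_simp
          have hxmono : x ^ β ≤ ((π ^ 2 * δ / 2) / |φ - θ₁|) ^ β :=
            Real.rpow_le_rpow hx0.le hRge hβ0.le
          calc ‖K w₁ τ - K w₂ τ‖ ≤ C₀ * x := hstep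
            _ ≤ 2 * C₀ * x ^ β := by nlinarith
            _ ≤ 2 * C₀ * (((π ^ 2 * δ / 2) / |φ - θ₁|) ^ β) := by
                exact mul_le_mul_of_nonneg_left hxmono (by positivity)
        · -- near case
          have h2C : ‖K w₁ τ - K w₂ τ‖ ≤ 2 * C₀ := by
            calc ‖K w₁ τ - K w₂ τ‖ ≤ ‖K w₁ τ‖ + ‖K w₂ τ‖ := norm_sub_le _ _
              _ ≤ C₀ + C₀ := add_le_add (hKbd w₁ τ hw₁ hτ1 (Ne.symm hne1))
                  (hKbd w₂ τ hw₂ hτ1 (Ne.symm hne2))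
              _ = 2 * C₀ := by ring
          have hx1 : 1 ≤ (π ^ 2 * δ / 2) / |φ - θ₁| := by
            have h1 : 1 < π * δ / ‖τ - w₁‖ :=
              (one_lt_div hτw₁pos).2 (lt_of_not_ge hcase)
            linarith
          have hge1 : 1 ≤ ((π ^ 2 * δ / 2) / |φ - θ₁|) ^ β := by
            calc (1:ℝ) = 1 ^ β := (Real.one_rpow β).symm
              _ ≤ _ := Real.rpow_le_rpow zero_le_one hx1 hβ0.le
          nlinarith
      -- combine
      have hfinal : ‖K w₁ τ - K w₂ τ‖ * ‖f τ‖ ≤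
          (2 * C₀ * (((π ^ 2 * δ / 2) / |φ - θ₁|) ^ β)) * M := by
        refine mul_le_mul hKdiff hfτ (norm_nonneg _) ?_
        have := Real.rpow_nonneg (le_of_lt (by positivity : (0:ℝ) < (π ^ 2 * δ / 2) / |φ - θ₁|)) β
        positivity
      refine hfinal.trans (le_of_eq ?_)
      rw [hHc, Real.div_rpow hrp.le (abs_nonneg _), Real.rpow_neg (abs_nonneg _)]
      field_simp
    -- integrability of the bound
    have hrint : IntervalIntegrable (fun x : ℝ => x ^ (-β)) volume 0 π :=
      intervalIntegral.intervalIntegrable_rpow' (by linarith)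
    have hright : IntervalIntegrable (fun φ : ℝ => |φ - θ₁| ^ (-β)) volume θ₁ b := by
      have h1 := hrint.comp_sub_right θ₁
      have h1' : IntervalIntegrable (fun x : ℝ => (x - θ₁) ^ (-β)) volume θ₁ (θ₁ + π) := by
        simpa [add_comm] using h1
      rw [intervalIntegrable_iff] at h1' ⊢
      rw [Set.uIoc_of_le (by rw [hb]; linarith : θ₁ ≤ b)]
      rw [Set.uIoc_of_le (by linarith : θ₁ ≤ θ₁ + π)] at h1'
      rw [hb]
      exact h1'.congr_fun (fun x hx => by rw [_root_.abs_of_nonneg (by linarith [hx.1] : (0:ℝ) ≤ x - θ₁)]) measurableSet_Ioc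
    have hleft : IntervalIntegrable (fun φ : ℝ => |φ - θ₁| ^ (-β)) volume a θ₁ := by
      have h1 := (hrint.comp_sub_left θ₁).symm
      have h1' : IntervalIntegrable (fun x : ℝ => (θ₁ - x) ^ (-β)) volume (θ₁ - π) θ₁ := by
        simpa using h1
      rw [intervalIntegrable_iff] at h1' ⊢
      rw [Set.uIoc_of_le (by rw [ha]; linarith : a ≤ θ₁)]
      rw [Set.uIoc_of_le (by linarith : θ₁ - π ≤ θ₁)] at h1'
      rw [ha]
      exact h1'.congr_fun (fun x hx => by
        rw [abs_sub_comm, _root_.abs_of_nonneg (by linarith [hx.2] : (0:ℝ) ≤ θ₁ - x)]) measurableSet_Ioc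
    have habs_int : IntervalIntegrable (fun φ : ℝ => |φ - θ₁| ^ (-β)) volume a b :=
      hleft.trans hright
    have hHint : IntervalIntegrable (fun φ : ℝ => Hc * |φ - θ₁| ^ (-β)) volume a b :=
      habs_int.const_mul Hc
    -- value of the bound integral
    have hval : (∫ φ in a..b, |φ - θ₁| ^ (-β)) = 2 * π ^ (1 - β) / (1 - β) := by
      have hpiece : (∫ x in (0:ℝ)..π, x ^ (-β)) = π ^ (1 - β) / (1 - β) := by
        rw [integral_rpow (Or.inl (by linarith : (-1:ℝ) < -β))]
        rw [Real.zero_rpow (by linarith : -β + 1 ≠ 0)]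
        rw [show -β + 1 = 1 - β by ring]
        ring
      have hR : (∫ φ in θ₁..b, |φ - θ₁| ^ (-β)) = π ^ (1 - β) / (1 - β) := by
        rw [intervalIntegral.integral_congr (g := fun φ : ℝ => (φ - θ₁) ^ (-β)) ?_]
        · rw [intervalIntegral.integral_comp_sub_right (fun x : ℝ => x ^ (-β)) θ₁]
          rw [show θ₁ - θ₁ = (0:ℝ) by ring, show b - θ₁ = π by rw [hb]; ring]
          exact hpiece
        · intro φ hφ
          rw [Set.uIcc_of_le (by rw [hb]; linarith : θ₁ ≤ b)] at hφ
          show |φ - θ₁| ^ (-β) = (φ - θ₁) ^ (-β)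
          rw [_root_.abs_of_nonneg (by linarith [hφ.1] : (0:ℝ) ≤ φ - θ₁)]
      have hL : (∫ φ in a..θ₁, |φ - θ₁| ^ (-β)) = π ^ (1 - β) / (1 - β) := by
        rw [intervalIntegral.integral_congr (g := fun φ : ℝ => (θ₁ - φ) ^ (-β)) ?_]
        · rw [intervalIntegral.integral_comp_sub_left (fun x : ℝ => x ^ (-β)) θ₁]
          rw [show θ₁ - θ₁ = (0:ℝ) by ring, show θ₁ - a = π by rw [ha]; ring]
          exact hpiece
        · intro φ hφ
          rw [Set.uIcc_of_le (by rw [ha]; linarith : a ≤ θ₁)] at hφ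
          show |φ - θ₁| ^ (-β) = (θ₁ - φ) ^ (-β)
          rw [abs_sub_comm, _root_.abs_of_nonneg (by linarith [hφ.2] : (0:ℝ) ≤ θ₁ - φ)]
      rw [← intervalIntegral.integral_add_adjacent_intervals hleft hright, hR, hL]
      ring
    -- assemble
    rw [hCA w₁ hw₁, hCA w₂ hw₂, ← mul_sub,
      ← intervalIntegral.integral_sub (hGint w₁ 0 (2 * π)) (hGint w₂ 0 (2 * π))]
    have hshift : (∫ φ in (0:ℝ)..2 * π, (G w₁ φ - G w₂ φ)) =
        ∫ φ in a..b, (G w₁ φ - G w₂ φ) := by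
      have hp := ((hGper w₁).sub (hGper w₂)).intervalIntegral_add_eq 0 a
      simp only [Pi.sub_apply, zero_add] at hp
      rw [hp, show a + 2 * π = b by rw [ha, hb]; ring]
    rw [hshift, norm_mul, hc]
    have hnull1 : ∀ᵐ φ : ℝ, Complex.exp (φ * Complex.I) ≠ w₁ := by
      rw [ae_iff]
      have h0 : {φ : ℝ | ¬Complex.exp (φ * Complex.I) ≠ w₁} =
          {φ : ℝ | Complex.exp (φ * Complex.I) = w₁} := by simp
      rw [h0]; exact (countable_expI_eq w₁).measure_zero volume
    have hnull2 : ∀ᵐ φ : ℝ, Complex.exp (φ * Complex.I) ≠ w₂ := by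
      rw [ae_iff]
      have h0 : {φ : ℝ | ¬Complex.exp (φ * Complex.I) ≠ w₂} =
          {φ : ℝ | Complex.exp (φ * Complex.I) = w₂} := by simp
      rw [h0]; exact (countable_expI_eq w₂).measure_zero volume
    have hbound : ‖∫ φ in a..b, (G w₁ φ - G w₂ φ)‖ ≤
        ∫ φ in a..b, Hc * |φ - θ₁| ^ (-β) := by
      rw [intervalIntegral.integral_of_le hab, intervalIntegral.integral_of_le hab]
      refine norm_integral_le_of_norm_le ?_ ?_
      · have := hHint
        rw [intervalIntegrable_iff, Set.uIoc_of_le hab] at this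
        exact this
      · filter_upwards [ae_restrict_mem measurableSet_Ioc, ae_restrict_of_ae hnull1,
          ae_restrict_of_ae hnull2] with φ h1 h2 h3
        exact key φ h1 h2 h3
    have hintval : (∫ φ in a..b, Hc * |φ - θ₁| ^ (-β)) = Hc * (2 * π ^ (1 - β) / (1 - β)) := by
      rw [intervalIntegral.integral_const_mul, hval]
    rw [hintval] at hbound
    calc (2 * π)⁻¹ * ‖∫ φ in a..b, (G w₁ φ - G w₂ φ)‖ ≤
        (2 * π)⁻¹ * (Hc * (2 * π ^ (1 - β) / (1 - β))) := by
          exact mul_le_mul_of_nonneg_left hbound (by positivity)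
      _ = (A / π) * (C₀ * M * δ ^ β) := by
          have h1β : (1:ℝ) - β ≠ 0 := by linarith
          rw [hHc, hA, show π ^ 2 * δ / 2 = (π ^ 2 / 2) * δ by ring,
            Real.mul_rpow (by positivity) hδ0.le]
          field_simp
      _ ≤ (1 + A / π) * C₀ * M * δ ^ β := by
          have h1 : 0 ≤ C₀ * M * δ ^ β := by
            have := Real.rpow_nonneg hδ0.le β
            positivity
          nlinarith [div_nonneg hA0 hπ.le]
end

section
/- Let 0 < α < 1 and for each integer n ≥ 1 set γ_n = 2(1+n)/(1−α/2) − (1+α/2)_n/(1−α/2)_n − (1+α/2)_{n+1}/(1−α/2)_{n+1}. Then there exist constants C₁ > 0 and C₂ > 0 (depending only on α) such that C₁ n ≤ γ_n ≤ C₂ n for every integer n ≥ 1. -/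
/-- The Pochhammer symbol `(x)_n = x (x+1) ⋯ (x+n-1)`. -/
noncomputable def poch (x : ℝ) (n : ℕ) : ℝ := (ascPochhammer ℝ n).eval x

lemma poch_zero' (x : ℝ) : poch x 0 = 1 := by simp [poch]

lemma poch_succ' (x : ℝ) (n : ℕ) : poch x (n+1) = poch x n * (x + n) := by
  simp [poch, ascPochhammer_succ_right, Polynomial.eval_mul]

theorem stmt8 (α : ℝ) (hα0 : 0 < α) (hα1 : α < 1) :
    ∃ C₁ C₂ : ℝ, 0 < C₁ ∧ 0 < C₂ ∧ ∀ n : ℕ, 1 ≤ n →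
      C₁ * n ≤ 2 * (1 + (n : ℝ)) / (1 - α / 2) - poch (1 + α / 2) n / poch (1 - α / 2) n -
          poch (1 + α / 2) (n + 1) / poch (1 - α / 2) (n + 1) ∧
      2 * (1 + (n : ℝ)) / (1 - α / 2) - poch (1 + α / 2) n / poch (1 - α / 2) n -
          poch (1 + α / 2) (n + 1) / poch (1 - α / 2) (n + 1) ≤ C₂ * n := by
  set a : ℝ := α / 2 with hadef
  have ha0 : 0 < a := by simp [hadef]; linarith
  have ha1 : a < 1/2 := by simp [hadef]; linarith
  have h1a : 0 < 1 - a := by linarith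
  have hq : ∀ n : ℕ, 0 < poch (1 - a) n := by
    intro n
    induction n with
    | zero => simp [poch_zero']
    | succ n ih =>
      rw [poch_succ']
      have hn : (0:ℝ) ≤ n := n.cast_nonneg
      exact mul_pos ih (by linarith)
  have key : ∀ n : ℕ, poch (1 - a) n ≤ poch (1 + a) n ∧
      (1 - a) * poch (1 + a) n ≤ ((1 - a) + 2 * a * n) * poch (1 - a) n := by
    intro n
    induction n with
    | zero => simp [poch_zero']
    | succ n ih =>
      obtain ⟨h1, h2⟩ := ih
      have hn : (0:ℝ) ≤ n := n.cast_nonneg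
      have hqn := hq n
      constructor
      · rw [poch_succ', poch_succ']
        push_cast
        nlinarith [hqn, h1]
      · rw [poch_succ', poch_succ']
        push_cast
        have step1 : (1 - a) * poch (1 + a) n * ((1 + a) + n)
            ≤ ((1 - a) + 2 * a * n) * poch (1 - a) n * ((1 + a) + n) := by
          apply mul_le_mul_of_nonneg_right h2
          linarith
        nlinarith [step1, hqn, mul_nonneg (mul_nonneg ha0.le hn) (by linarith : (0:ℝ) ≤ 1 - 2*a)]
  refine ⟨2 * (1 - 2*a) / (1 - a), (2 + 2*a) / (1 - a), ?_, ?_, ?_⟩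
  · exact div_pos (by linarith) h1a
  · exact div_pos (by linarith) h1a
  intro n hn
  have hn1 : (1:ℝ) ≤ n := by exact_mod_cast hn
  have hqn := hq n
  have hqn1 := hq (n + 1)
  obtain ⟨h1, h2⟩ := key n
  obtain ⟨h1', h2'⟩ := key (n + 1)
  have hlo : (1:ℝ) ≤ poch (1 + a) n / poch (1 - a) n := (one_le_div hqn).mpr h1
  have hlo' : (1:ℝ) ≤ poch (1 + a) (n+1) / poch (1 - a) (n+1) := (one_le_div hqn1).mpr h1'
  have hup : poch (1 + a) n / poch (1 - a) n ≤ ((1 - a) + 2 * a * n) / (1 - a) := by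
    rw [div_le_div_iff₀ hqn h1a]
    nlinarith [h2]
  have hup' : poch (1 + a) (n+1) / poch (1 - a) (n+1)
      ≤ ((1 - a) + 2 * a * (n+1)) / (1 - a) := by
    rw [div_le_div_iff₀ hqn1 h1a]
    push_cast at h2' ⊢
    nlinarith [h2']
  constructor
  · have e : 2 * (1 - 2*a) / (1 - a) * n
        = 2 * (1 + (n:ℝ)) / (1 - a) - ((1 - a) + 2 * a * n) / (1 - a)
          - ((1 - a) + 2 * a * (n+1)) / (1 - a) := by
      field_simp
      ring
    rw [e]
    linarith [hup, hup']
  · have e : (2 + 2*a) / (1 - a) * n - (2 * (1 + (n:ℝ)) / (1 - a) - 1 - 1)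
        = (2 * a * (n - 1)) / (1 - a) := by
      field_simp
      ring
    have hpos : 0 ≤ (2 * a * ((n:ℝ) - 1)) / (1 - a) := by
      apply div_nonneg _ h1a.le
      nlinarith
    linarith [hlo, hlo']
end

section
/- Let d > 2. There exists ε₀ > 0 such that for every Ω ∈ ℝ and every ε ∈ ℝ with 0 < |ε| ≤ ε₀, the function w ↦ Im(−2dΩ w + w/(2d − εw)) is not identically zero on the unit circle; i.e., there exists w ∈ ℂ with |w| = 1 and Im(−2dΩ w + w/(2d − εw)) ≠ 0. -/
lemma aux_im (d Ω ε x y : ℝ) (hD : (2*d-ε*x)^2+(ε*y)^2 ≠ 0) :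
    (-2 * (d:ℂ) * Ω * (x + y*Complex.I) + (x + y*Complex.I) / (2*(d:ℂ) - ε*(x + y*Complex.I))).im
      = -2*d*Ω*y + (2*d*y)/((2*d-ε*x)^2+(ε*y)^2) := by
  have h : Complex.normSq (2*(d:ℂ) - ε*(x + y*Complex.I)) = (2*d-ε*x)^2+(ε*y)^2 := by
    simp [Complex.normSq_apply]; ring
  simp [Complex.div_im, h, Complex.add_im, Complex.mul_im, Complex.mul_re]
  field_simp
  ring

theorem stmt11 (d : ℝ) (hd : 2 < d) :
    ∃ ε₀ : ℝ, 0 < ε₀ ∧ ∀ (Ω ε : ℝ), 0 < |ε| → |ε| ≤ ε₀ →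
      ∃ w : ℂ, ‖w‖ = 1 ∧
        (-2 * (d : ℂ) * (Ω : ℂ) * w + w / (2 * (d : ℂ) - (ε : ℂ) * w)).im ≠ 0 := by
  refine ⟨1, one_pos, fun Ω ε hε hε1 => ?_⟩
  have hε' : ε ≠ 0 := fun h => by simp [h] at hε
  set s := Real.sqrt 3 with hs
  have hs2 : s^2 = 3 := Real.sq_sqrt (by norm_num)
  have hs0 : 0 < s := Real.sqrt_pos.mpr (by norm_num)
  have hεb : -1 ≤ ε ∧ ε ≤ 1 := abs_le.mp hε1
  have hD1 : (0:ℝ) < (2*d-ε*0)^2+(ε*1)^2 := by nlinarith [sq_nonneg ε, hεb.1, hεb.2]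
  have hD2 : (0:ℝ) < (2*d-ε*(1/2))^2+(ε*(s/2))^2 := by
    nlinarith [sq_nonneg (ε*(s/2)), hεb.1, hεb.2]
  by_cases h1 : (-2 * (d:ℂ) * Ω * ((0:ℝ) + (1:ℝ)*Complex.I) + ((0:ℝ) + (1:ℝ)*Complex.I) / (2*(d:ℂ) - ε*((0:ℝ) + (1:ℝ)*Complex.I))).im ≠ 0
  · refine ⟨(0:ℝ) + (1:ℝ)*Complex.I, ?_, h1⟩
    simp
  · push_neg at h1
    refine ⟨(1/2:ℝ) + (s/2:ℝ)*Complex.I, ?_, ?_⟩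
    · rw [Complex.norm_def, Complex.normSq_apply]
      simp only [Complex.add_re, Complex.add_im, Complex.mul_re, Complex.mul_im,
        Complex.ofReal_re, Complex.ofReal_im, Complex.I_re, Complex.I_im]
      rw [show ((1/2:ℝ) + ((s/2)*0 - 0*1)) * ((1/2:ℝ) + ((s/2)*0 - 0*1)) + ((0:ℝ) + ((s/2)*1 + 0*0)) * ((0:ℝ) + ((s/2)*1 + 0*0)) = 1/4 + s^2/4 by ring, hs2]
      norm_num
    · rw [aux_im d Ω ε (1/2) (s/2) hD2.ne']
      rw [aux_im d Ω ε 0 1 hD1.ne'] at h1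
      have e1 : 2*d*Ω = 2*d/((2*d-ε*0)^2+(ε*1)^2) := by linear_combination -h1
      intro h2
      have e2 : 2*d/((2*d-ε*0)^2+(ε*1)^2)*(s/2) = 2*d*(s/2)/((2*d-ε*(1/2))^2+(ε*(s/2))^2) := by
        linear_combination (-(s/2))*e1 - h2
      rw [div_mul_eq_mul_div, div_eq_div_iff hD1.ne' hD2.ne'] at e2
      have hds : (0:ℝ) < 2*d*(s/2) := by positivity
      have hAB : ((2*d-ε*(1/2))^2+(ε*(s/2))^2) = ((2*d-ε*0)^2+(ε*1)^2) := by
        have := mul_left_cancel₀ hds.ne' (by linear_combination e2 : 2*d*(s/2)*((2*d-ε*(1/2))^2+(ε*(s/2))^2) = 2*d*(s/2)*((2*d-ε*0)^2+(ε*1)^2))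
        exact this
      have hε0 : ε = 0 := by nlinarith [hs2]
      exact hε' hε0
end

section
/- Let d > 2. There exists ε₀ > 0 such that for every U ∈ ℝ and every ε ∈ ℝ with 0 < |ε| ≤ ε₀, the function w ↦ Im(2U w + w/(εw − 2d)) is not identically zero on the unit circle; i.e., there exists w ∈ ℂ with |w| = 1 and Im(2U w + w/(εw − 2d)) ≠ 0. -/
lemma aux12 (U ε d a b : ℝ) :
    (2 * (U:ℂ) * (⟨a,b⟩:ℂ) + (⟨a,b⟩:ℂ) / ((ε:ℂ) * (⟨a,b⟩:ℂ) - 2*(d:ℂ))).im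
      = 2*U*b - 2*d*b / ((ε*a-2*d)^2 + (ε*b)^2) := by
  simp [Complex.add_im, Complex.mul_im, Complex.div_im, Complex.sub_re, Complex.sub_im,
    Complex.mul_re, Complex.normSq_apply, Complex.ofReal_re, Complex.ofReal_im]
  ring_nf

theorem stmt12 (d : ℝ) (hd : 2 < d) :
    ∃ ε₀ : ℝ, 0 < ε₀ ∧ ∀ (U ε : ℝ), 0 < |ε| → |ε| ≤ ε₀ →
      ∃ w : ℂ, ‖w‖ = 1 ∧
        (2 * (U : ℂ) * w + w / ((ε : ℂ) * w - 2 * (d : ℂ))).im ≠ 0 := by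
  refine ⟨1, one_pos, fun U ε hε _ => ?_⟩
  have hε0 : ε ≠ 0 := by
    intro h; simp [h] at hε
  have hd0 : 0 < d := by linarith
  set s : ℝ := Real.sqrt 2 / 2 with hs
  have hs2 : s^2 = 1/2 := by
    rw [hs, div_pow, Real.sq_sqrt (by norm_num : (0:ℝ) ≤ 2)]; norm_num
  have hspos : 0 < s := by positivity
  set N₁ : ℝ := (ε*0-2*d)^2 + (ε*1)^2 with hN1
  set N₂ : ℝ := (ε*s-2*d)^2 + (ε*s)^2 with hN2
  have hN1pos : 0 < N₁ := by
    rw [hN1]; nlinarith [sq_nonneg ε, sq_nonneg (ε*0-2*d)]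
  have hN2pos : 0 < N₂ := by
    rw [hN2]
    have : 0 < (ε*s)^2 := by positivity
    nlinarith [sq_nonneg (ε*s-2*d)]
  by_cases h : 2*U - 2*d/N₁ = 0
  · -- use w₂ = s + s i
    refine ⟨⟨s, s⟩, ?_, ?_⟩
    · rw [Complex.norm_def, Complex.normSq_mk]
      rw [show s*s + s*s = 1 by nlinarith]
      exact Real.sqrt_one
    · rw [aux12, ← hN2]
      have hU : 2*U = 2*d/N₁ := by linarith
      have hne : N₁ ≠ N₂ := by
        rw [hN1, hN2]
        intro hcon
        have : 2 * (ε*s) * (2*d) = 0 := by nlinarith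
        have : ε * s = 0 := by
          have h2 : 2 * (ε*s) = 0 := by
            rcases mul_eq_zero.1 this with h'|h'
            · exact h'
            · nlinarith
          rcases mul_eq_zero.1 h2 with h'|h'
          · norm_num at h'
          · exact h'
        rcases mul_eq_zero.1 this with h'|h'
        · exact hε0 h'
        · exact hspos.ne' h'
      have key : 2*d/N₁ ≠ 2*d/N₂ := by
        intro hcon
        apply hne
        field_simp at hcon
        nlinarith
      intro hzero
      apply key
      rw [← hU]
      have : s * (2*U - 2*d/N₂) = 0 := by
        rw [← hzero]; ring
      have h2 : 2*U - 2*d/N₂ = 0 := by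
        rcases mul_eq_zero.1 this with h'|h'
        · exact absurd h' (ne_of_gt hspos)
        · exact h'
      linarith
  · -- use w₁ = i
    refine ⟨⟨0, 1⟩, ?_, ?_⟩
    · rw [Complex.norm_def, Complex.normSq_mk]; norm_num
    · rw [aux12, ← hN1]
      intro hzero
      apply h
      simp only [mul_one] at hzero
      linarith
end

section
/- Let r < 1 and let f be holomorphic on {z ∈ ℂ : |z| > r} with |f'(w)| ≤ 1 and |f''(w)| ≤ 1 for all w with |w| = 1. Let δ ∈ ℂ with |δ| < 1/2 and set φ(w) = w + δ f(w). Then for every w with |w| = 1, Re(1 + w φ''(w)/φ'(w)) ≥ 1 − |δ|/(1 − |δ|) > 0. In particular the curvature of the curve φ(𝕋), given by κ = (1/|φ'(w)|) Re(1 + w φ''(w)/φ'(w)), is strictly positive, so the domain bounded by φ(𝕋) is strictly convex. -/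
theorem stmt13 (r : ℝ) (hr : r < 1) (f : ℂ → ℂ)
    (hf : DifferentiableOn ℂ f {z : ℂ | r < ‖z‖})
    (hf1 : ∀ w : ℂ, ‖w‖ = 1 → ‖deriv f w‖ ≤ 1)
    (hf2 : ∀ w : ℂ, ‖w‖ = 1 → ‖deriv (deriv f) w‖ ≤ 1)
    (δ : ℂ) (hδ : ‖δ‖ < 1 / 2) :
    ∀ w : ℂ, ‖w‖ = 1 →
      1 - ‖δ‖ / (1 - ‖δ‖) ≤
          ((1 : ℂ) + w * deriv (deriv (fun z : ℂ => z + δ * f z)) w /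
            deriv (fun z : ℂ => z + δ * f z) w).re ∧
        0 < 1 - ‖δ‖ / (1 - ‖δ‖) := by
  intro w hw
  have hpos : 0 < 1 - ‖δ‖ := by linarith
  have hlast : 0 < 1 - ‖δ‖ / (1 - ‖δ‖) := by
    rw [sub_pos, div_lt_one hpos]; linarith
  refine ⟨?_, hlast⟩
  set s : Set ℂ := {z : ℂ | r < ‖z‖} with hs_def
  have hs : IsOpen s := isOpen_lt continuous_const continuous_norm
  have hws : w ∈ s := by simp only [hs_def, Set.mem_setOf_eq]; rw [hw]; exact hr
  have hderiv : ∀ z ∈ s, deriv (fun z : ℂ => z + δ * f z) z = 1 + δ * deriv f z := by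
    intro z hz
    have hfz : DifferentiableAt ℂ f z := hf.differentiableAt (hs.mem_nhds hz)
    have h1 : HasDerivAt (fun z : ℂ => z + δ * f z) (1 + δ * deriv f z) z :=
      (hasDerivAt_id z).add (hfz.hasDerivAt.const_mul δ)
    exact h1.deriv
  have h2 : deriv (deriv (fun z : ℂ => z + δ * f z)) w = δ * deriv (deriv f) w := by
    have hev : deriv (fun z : ℂ => z + δ * f z) =ᶠ[nhds w]
        fun z => 1 + δ * deriv f z :=
      Filter.eventuallyEq_of_mem (hs.mem_nhds hws) hderiv
    rw [hev.deriv_eq, deriv_const_add]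
    exact deriv_const_mul_field δ
  rw [h2, hderiv w hws]
  set A := deriv f w
  set B := deriv (deriv f) w
  have hA : ‖δ * A‖ ≤ ‖δ‖ := by
    rw [norm_mul]
    calc ‖δ‖ * ‖A‖ ≤ ‖δ‖ * 1 := by
          exact mul_le_mul_of_nonneg_left (hf1 w hw) (norm_nonneg δ)
      _ = ‖δ‖ := mul_one _
  have hB : ‖δ * B‖ ≤ ‖δ‖ := by
    rw [norm_mul]
    calc ‖δ‖ * ‖B‖ ≤ ‖δ‖ * 1 := by
          exact mul_le_mul_of_nonneg_left (hf2 w hw) (norm_nonneg δ)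
      _ = ‖δ‖ := mul_one _
  have hden : 1 - ‖δ‖ ≤ ‖1 + δ * A‖ := by
    have h3 : ‖(1 : ℂ)‖ ≤ ‖1 + δ * A‖ + ‖δ * A‖ := by
      have := norm_add_le (1 + δ * A) (-(δ * A))
      simpa using this
    simp only [norm_one] at h3
    linarith
  have hX : ‖w * (δ * B) / (1 + δ * A)‖ ≤ ‖δ‖ / (1 - ‖δ‖) := by
    rw [norm_div, norm_mul, hw, one_mul]
    exact div_le_div₀ (norm_nonneg δ) hB hpos hden
  have hre : -(‖δ‖ / (1 - ‖δ‖)) ≤ (w * (δ * B) / (1 + δ * A)).re := by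
    have h4 : |(w * (δ * B) / (1 + δ * A)).re| ≤ ‖w * (δ * B) / (1 + δ * A)‖ :=
      Complex.abs_re_le_norm _
    have h5 := (abs_le.mp h4).1
    linarith
  simp only [Complex.add_re, Complex.one_re]
  linarith
end

section
/- Let r < 1 and let h be holomorphic on {z ∈ ℂ : |z| > r} with Laurent expansion h(z) = Σ_{n≥1} a_n z^{−n} (a_n ∈ ℂ) converging for |z| > r. Then for every w ∈ ℂ with |w| = 1, (1/(2πi)) ∫_{𝕋} ((conj(τ) − conj(w))/(τ − w)) · h'(τ) dτ = 0. -/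
open Complex Metric Set MeasureTheory intervalIntegral Real Filter

theorem stmt14 (r : ℝ) (hr : r < 1) (h : ℂ → ℂ) (a : ℕ → ℂ)
    (hh : DifferentiableOn ℂ h {z : ℂ | r < ‖z‖})
    (hsum : ∀ z : ℂ, r < ‖z‖ →
      HasSum (fun n : ℕ => a (n + 1) * z ^ (-(n + 1 : ℤ))) (h z))
    (w : ℂ) (hw : ‖w‖ = 1) :
    circAvg (fun τ =>
      ((starRingEnd ℂ) τ - (starRingEnd ℂ) w) / (τ - w) * deriv h τ) = 0 := by
  have hUopen : IsOpen {z : ℂ | r < ‖z‖} := isOpen_lt continuous_const continuous_norm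
  have hsph : ∀ z ∈ sphere (0:ℂ) 1, z ∈ {z : ℂ | r < ‖z‖} := by
    intro z hz
    have hz1 : ‖z‖ = 1 := by simpa using hz
    simp only [Set.mem_setOf_eq, hz1]; exact hr
  have hsph0 : ∀ z ∈ sphere (0:ℂ) 1, z ≠ 0 := by
    intro z hz hz0
    have hz1 : ‖z‖ = 1 := by simpa using hz
    simp [hz0] at hz1
  -- ρ with max r 0 < ρ < 1
  set ρ : ℝ := (max r 0 + 1) / 2 with hρdef
  have hm1 : max r 0 < 1 := max_lt hr one_pos
  have hρ0 : 0 < ρ := by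
    have : (0:ℝ) ≤ max r 0 := le_max_right _ _
    simp only [hρdef]; linarith
  have hρr : r < ρ := by
    have : r ≤ max r 0 := le_max_left _ _
    simp only [hρdef]; linarith
  have hρ1 : ρ < 1 := by simp only [hρdef]; linarith
  -- bound on coefficients
  have hρnorm : ‖(ρ:ℂ)‖ = ρ := by
    rw [Complex.norm_real, Real.norm_of_nonneg hρ0.le]
  have hρC : r < ‖(ρ:ℂ)‖ := by rw [hρnorm]; exact hρr
  have hρne : (ρ:ℂ) ≠ 0 := by
    exact_mod_cast hρ0.ne'
  obtain ⟨C, hC⟩ : ∃ C : ℝ, ∀ n : ℕ, ‖a (n+1) * (ρ:ℂ) ^ (-(n+1:ℤ))‖ ≤ C := by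
    have hs := (hsum (ρ:ℂ) hρC).summable
    have ht : Tendsto (fun n : ℕ => ‖a (n+1) * (ρ:ℂ) ^ (-(n+1:ℤ))‖) atTop (nhds 0) := by
      simpa using hs.tendsto_atTop_zero.norm
    obtain ⟨C, hC⟩ := ht.bddAbove_range
    exact ⟨C, fun n => hC ⟨n, rfl⟩⟩
  have hbound : ∀ n : ℕ, ‖a (n+1)‖ ≤ C * ρ ^ (n+1) := by
    intro n
    have hnorm : ‖a (n+1) * (ρ:ℂ) ^ (-(n+1:ℤ))‖ = ‖a (n+1)‖ * (ρ ^ (n+1))⁻¹ := by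
      rw [norm_mul, norm_zpow, hρnorm,
        show (-(n+1:ℤ)) = -((n+1:ℕ):ℤ) by push_cast; ring, zpow_neg, zpow_natCast]
    have hp : (0:ℝ) < ρ ^ (n+1) := by positivity
    have h1 : ‖a (n+1)‖ * (ρ ^ (n+1))⁻¹ ≤ C := hnorm ▸ hC n
    calc ‖a (n+1)‖ = (‖a (n+1)‖ * (ρ ^ (n+1))⁻¹) * ρ ^ (n+1) := by field_simp
      _ ≤ C * ρ ^ (n+1) := mul_le_mul_of_nonneg_right h1 hp.le
  -- continuity of h and deriv h on the annulus
  have hhA : AnalyticOnNhd ℂ h {z : ℂ | r < ‖z‖} := hh.analyticOnNhd hUopen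
  have hdc : ContinuousOn (deriv h) {z : ℂ | r < ‖z‖} := hhA.deriv.continuousOn
  have hhc : ContinuousOn h {z : ℂ | r < ‖z‖} := hh.continuousOn
  -- Step 1 : ∮ h z * z^(-2) = 0
  have key1 : (∮ z in C(0,1), h z * z ^ (-2:ℤ)) = 0 := by
    set F : ℕ → ℝ → ℂ := fun n θ =>
      deriv (circleMap 0 1) θ • (a (n+1) * (circleMap 0 1 θ) ^ (-(n+3) : ℤ)) with hF
    have hFint : ∀ n, (∫ θ in (0:ℝ)..(2*π), F n θ) = 0 := by
      intro n
      have h1 : (∫ θ in (0:ℝ)..(2*π), F n θ)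
          = ∮ z in C(0,1), a (n+1) * z ^ (-(n+3):ℤ) := rfl
      rw [h1, circleIntegral.integral_const_mul]
      have h2 : (∮ z in C(0,1), (z - 0) ^ (-(n+3):ℤ)) = 0 :=
        circleIntegral.integral_sub_zpow_of_ne (by omega) 0 0 1
      simp only [sub_zero] at h2
      rw [h2, mul_zero]
    have hHS : HasSum (fun n => ∫ θ in (0:ℝ)..(2*π), F n θ)
        (∮ z in C(0,1), h z * z ^ (-2:ℤ)) := by
      apply intervalIntegral.hasSum_integral_of_dominated_convergence
        (bound := fun n _ => C * ρ ^ (n+1))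
      · intro n
        apply Continuous.aestronglyMeasurable
        have hc1 : Continuous fun θ => (circleMap 0 1 θ) ^ (-(n+3) : ℤ) :=
          (continuous_circleMap 0 1).zpow₀ _ (fun θ => Or.inl (circleMap_ne_center one_ne_zero))
        exact (((continuous_circleMap 0 1).mul (continuous_const (y := I))).mul ((continuous_const (y := a (n+1))).mul hc1)).congr
          (fun θ => by simp [hF, deriv_circleMap])
      · intro n
        filter_upwards with θ _
        have : ‖F n θ‖ = ‖a (n+1)‖ := by
          simp [hF, deriv_circleMap, norm_smul, norm_circleMap_zero]
        rw [this]; exact hbound n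
      · filter_upwards with θ _
        have : Summable fun n : ℕ => (C * ρ) * ρ ^ n := by
          exact (summable_geometric_of_lt_one hρ0.le hρ1).mul_left _
        apply this.congr
        intro n; ring
      · exact intervalIntegrable_const
      · filter_upwards with θ _
        set τ := circleMap 0 1 θ with hτ
        have hτs : τ ∈ sphere (0:ℂ) 1 := circleMap_mem_sphere 0 one_pos.le θ
        have hτ0 : τ ≠ 0 := hsph0 τ hτs
        have hτU : r < ‖τ‖ := hsph τ hτs
        have h1 := (hsum τ hτU).mul_left (deriv (circleMap 0 1) θ * τ ^ (-2:ℤ))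
        have heq : (fun n => deriv (circleMap 0 1) θ * τ ^ (-2:ℤ) * (a (n+1) * τ ^ (-(n+1:ℤ))))
            = fun n => F n θ := by
          funext n
          have : τ ^ (-(n+3):ℤ) = τ ^ (-(n+1:ℤ)) * τ ^ (-2:ℤ) := by
            rw [← zpow_add₀ hτ0]; norm_num; ring_nf
          simp only [hF, smul_eq_mul, ← hτ, this]; ring
        rw [heq] at h1
        have heq2 : deriv (circleMap 0 1) θ * τ ^ (-2:ℤ) * h τ
            = deriv (circleMap 0 1) θ • (h τ * τ ^ (-2:ℤ)) := by
          simp [smul_eq_mul]; ring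
        rwa [heq2] at h1
    rw [funext hFint] at hHS
    exact (hasSum_zero.unique hHS).symm
  -- Step 2 : ∮ (deriv h z * z - h z) * z^(-2) = 0  (derivative of h z / z)
  have key2 : (∮ z in C(0,1), (deriv h z * z - h z) * z ^ (-2:ℤ)) = 0 := by
    apply circleIntegral.integral_eq_zero_of_hasDerivWithinAt (f := fun z => h z / z) one_pos.le
    intro z hz
    have hz0 : z ≠ 0 := hsph0 z hz
    have hd : HasDerivAt h (deriv h z) z :=
      (hh.differentiableAt (hUopen.mem_nhds (hsph z hz))).hasDerivAt
    have hder := (hd.div (hasDerivAt_id z) hz0)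
    simp only [id] at hder
    have hz2 : z ^ (-2:ℤ) = (z ^ 2)⁻¹ := by
      rw [show (-2:ℤ) = -(2:ℕ) by norm_num, zpow_neg, zpow_natCast]
    have heq : (deriv h z * z - h z * 1) / z ^ 2 = (deriv h z * z - h z) * z ^ (-2:ℤ) := by
      rw [hz2, mul_one, div_eq_mul_inv]
    rw [heq] at hder
    exact hder.hasDerivWithinAt
  -- integrabilities
  have hi2 : CircleIntegrable (fun z => h z * z ^ (-2:ℤ)) 0 1 := by
    apply ContinuousOn.circleIntegrable one_pos.le
    apply ContinuousOn.mul (hhc.mono hsph)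
    intro z hz
    exact ((continuousAt_id.zpow₀ _ (Or.inl (hsph0 z hz))).continuousWithinAt)
  have hi3 : CircleIntegrable (fun z => deriv h z * z⁻¹) 0 1 := by
    apply ContinuousOn.circleIntegrable one_pos.le
    apply ContinuousOn.mul (hdc.mono hsph)
    intro z hz
    exact ((continuousAt_id.zpow₀ (-1:ℤ) (Or.inl (hsph0 z hz))).continuousWithinAt).congr
      (fun x _ => by simp) (by simp)
  -- Step 3 : ∮ deriv h z * z⁻¹ = 0
  have key3 : (∮ z in C(0,1), deriv h z * z⁻¹) = 0 := by
    have hsplit : (∮ z in C(0,1), (deriv h z * z - h z) * z ^ (-2:ℤ))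
        = (∮ z in C(0,1), deriv h z * z⁻¹) - ∮ z in C(0,1), h z * z ^ (-2:ℤ) := by
      rw [← circleIntegral.integral_sub hi3 hi2]
      apply circleIntegral.integral_congr one_pos.le
      intro z hz
      have hz0 : z ≠ 0 := hsph0 z hz
      show (deriv h z * z - h z) * z ^ (-2:ℤ) = deriv h z * z⁻¹ - h z * z ^ (-2:ℤ)
      rw [show ((-2:ℤ)) = -((2:ℕ):ℤ) by norm_num, zpow_neg, zpow_natCast]
      field_simp

    rw [key2, key1, sub_zero] at hsplit
    exact hsplit.symm
  -- the set where circleMap hits w is null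
  have hwnull : ∀ᵐ θ : ℝ, circleMap 0 1 θ ≠ w := by
    have h0 : MeasureTheory.volume {θ : ℝ | circleMap 0 1 θ = w} = 0 := ?_
    · exact measure_eq_zero_iff_ae_notMem.mp h0
    rcases Set.eq_empty_or_nonempty {θ : ℝ | circleMap 0 1 θ = w} with he | ⟨θ₀, hθ₀⟩
    · simp [he]
    · have hsub : {θ : ℝ | circleMap 0 1 θ = w} ⊆ Set.range (fun k : ℤ => θ₀ + k * (2*π)) := by
        intro θ hθ
        simp only [Set.mem_setOf_eq] at hθ hθ₀
        have : Complex.exp (θ * Complex.I) = Complex.exp (θ₀ * Complex.I) := by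
          have e1 : circleMap 0 1 θ = Complex.exp (θ * Complex.I) := by simp [circleMap]
          have e2 : circleMap 0 1 θ₀ = Complex.exp (θ₀ * Complex.I) := by simp [circleMap]
          rw [← e1, ← e2, hθ, hθ₀]
        obtain ⟨k, hk⟩ := Complex.exp_eq_exp_iff_exists_int.mp this
        refine ⟨k, ?_⟩
        have : (θ : ℂ) = θ₀ + k * (2*π) := by
          have h2 : (θ:ℂ) * Complex.I = (θ₀ + k * (2*π)) * Complex.I := by
            rw [hk]; ring
          exact mul_right_cancel₀ Complex.I_ne_zero h2
        exact_mod_cast this.symm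
      exact measure_mono_null hsub ((Set.countable_range _).measure_zero _)
  -- conclude
  have hmain : (∮ τ in C(0,1),
      ((starRingEnd ℂ) τ - (starRingEnd ℂ) w) / (τ - w) * deriv h τ)
      = ∮ τ in C(0,1), (-w⁻¹) * (deriv h τ * τ⁻¹) := by
    apply intervalIntegral.integral_congr_ae
    filter_upwards [hwnull] with θ hθ _
    set τ := circleMap 0 1 θ with hτdef
    have hτs : τ ∈ sphere (0:ℂ) 1 := circleMap_mem_sphere 0 one_pos.le θ
    have hτ1 : ‖τ‖ = 1 := by simpa using hτs
    have hτ0 : τ ≠ 0 := hsph0 τ hτs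
    have hw0 : w ≠ 0 := by intro h0; simp [h0] at hw
    have hconjτ : (starRingEnd ℂ) τ = τ⁻¹ := by
      rw [Complex.inv_def]
      have : Complex.normSq τ = 1 := by
        rw [Complex.normSq_eq_norm_sq, hτ1]; norm_num
      simp [this]
    have hconjw : (starRingEnd ℂ) w = w⁻¹ := by
      rw [Complex.inv_def]
      have : Complex.normSq w = 1 := by
        rw [Complex.normSq_eq_norm_sq, hw]; norm_num
      simp [this]
    have hτw : τ - w ≠ 0 := sub_ne_zero.mpr hθ
    congr 1
    rw [hconjτ, hconjw]
    field_simp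
    ring
  have : (∮ τ in C(0,1),
      ((starRingEnd ℂ) τ - (starRingEnd ℂ) w) / (τ - w) * deriv h τ) = 0 := by
    rw [hmain, circleIntegral.integral_const_mul, key3, mul_zero]
  rw [circAvg, this, mul_zero]
end

section
/- Let r < 1 and let h be holomorphic on {z ∈ ℂ : |z| > r} with Laurent expansion h(z) = Σ_{n≥1} a_n z^{−n} where all a_n are real, converging for |z| > r. Then for every w ∈ ℂ with |w| = 1, (1/(2πi)) ∫_{𝕋} Im[(τ − w)(h(conj(τ)) − h(conj(w)))] / (τ − w)² dτ = 0. -/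
open Complex Metric intervalIntegral Set MeasureTheory

lemma inv_circleIntegral (F : ℂ → ℂ) :
    (∮ τ in C(0,1), (τ⁻¹)^2 * F τ⁻¹) = ∮ σ in C(0,1), F σ := by
  have key : ∀ θ : ℝ, circleMap 0 1 (2 * Real.pi - θ) = (circleMap 0 1 θ)⁻¹ := by
    intro θ
    simp only [circleMap, zero_add, one_mul, ofReal_one, ← Complex.exp_neg]
    rw [show ((2 * Real.pi - θ : ℝ) : ℂ) * I = 2 * Real.pi * I + (-θ : ℝ) * I by push_cast; ring,
      Complex.exp_add, Complex.exp_two_pi_mul_I, one_mul]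
    push_cast
    ring_nf
  have : (∮ τ in C(0,1), (τ⁻¹)^2 * F τ⁻¹)
      = ∫ θ in (0:ℝ)..(2*Real.pi),
          (fun θ' => deriv (circleMap 0 1) θ' • F (circleMap 0 1 θ')) (2 * Real.pi - θ) := by
    rw [circleIntegral]
    apply intervalIntegral.integral_congr
    intro θ _
    simp only [deriv_circleMap, key, smul_eq_mul]
    have he : circleMap 0 1 θ ≠ 0 := circleMap_ne_center one_ne_zero
    field_simp
  rw [this,
    intervalIntegral.integral_comp_sub_left
      (fun θ' => deriv (circleMap 0 1) θ' • F (circleMap 0 1 θ')) (2*Real.pi)]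
  simp [circleIntegral]

theorem stmt15 (r : ℝ) (hr : r < 1) (h : ℂ → ℂ) (a : ℕ → ℝ)
    (hh : DifferentiableOn ℂ h {z : ℂ | r < ‖z‖})
    (hsum : ∀ z : ℂ, r < ‖z‖ →
      HasSum (fun n : ℕ => ((a (n + 1) : ℝ) : ℂ) * z ^ (-(n + 1 : ℤ))) (h z))
    (w : ℂ) (hw : ‖w‖ = 1) :
    circAvg (fun τ =>
      ((((τ - w) * (h ((starRingEnd ℂ) τ) - h ((starRingEnd ℂ) w))).im : ℝ) : ℂ) /
        (τ - w) ^ 2) = 0 := by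
  have hw0 : w ≠ 0 := by
    intro h0; rw [h0] at hw; simp at hw
  have hopen : IsOpen {z : ℂ | r < ‖z‖} := isOpen_lt continuous_const continuous_norm
  set r₀ : ℝ := max r 2⁻¹ with hr₀def
  have hr₀pos : 0 < r₀ := lt_max_of_lt_right (by norm_num)
  have hr₀lt : r₀ < 1 := max_lt hr (by norm_num)
  set R : ℝ := r₀⁻¹ with hRdef
  have hR : 1 < R := by
    rw [hRdef]
    exact (one_lt_inv₀ hr₀pos).mpr hr₀lt
  set H : ℂ → ℂ := fun z => if z = 0 then 0 else h z⁻¹ with hHdef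
  have hHval : ∀ z : ℂ, z ≠ 0 → H z = h z⁻¹ := by
    intro z hz; simp [hHdef, hz]
  have hmem : ∀ τ : ℂ, τ ∈ ball (0:ℂ) R → τ ≠ 0 → r < ‖τ⁻¹‖ := by
    intro τ hτ hτ0
    rw [mem_ball_zero_iff] at hτ
    have hn : 0 < ‖τ‖ := norm_pos_iff.2 hτ0
    rw [norm_inv]
    calc r ≤ r₀ := le_max_left _ _
      _ < ‖τ‖⁻¹ := by
        rw [lt_inv_comm₀ hr₀pos hn] at *
        · exact hτ
  have hHdiffAt : ∀ τ : ℂ, τ ∈ ball (0:ℂ) R → τ ≠ 0 → DifferentiableAt ℂ H τ := by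
    intro τ hτ hτ0
    have hd : DifferentiableAt ℂ (fun z : ℂ => h z⁻¹) τ := by
      have h1 : DifferentiableAt ℂ h τ⁻¹ :=
        hh.differentiableAt (hopen.mem_nhds (hmem τ hτ hτ0))
      exact h1.comp τ (differentiableAt_inv hτ0)
    apply hd.congr_of_eventuallyEq
    filter_upwards [isOpen_ne.mem_nhds hτ0] with z hz
    simp [hHdef, hz]
  -- uniform bound on the coefficients
  obtain ⟨C, hC⟩ : ∃ C : ℝ, ∀ n, |a (n+1)| ≤ C := by
    have hs : Summable (fun n : ℕ => ((a (n + 1) : ℝ) : ℂ)) := by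
      have := (hsum 1 (by simpa using hr)).summable
      simpa using this
    have ht : Filter.Tendsto (fun n : ℕ => |a (n+1)|) Filter.atTop (nhds 0) := by
      have := hs.tendsto_atTop_zero
      have := (tendsto_zero_iff_norm_tendsto_zero.mp this)
      simpa [Complex.norm_real] using this
    obtain ⟨C, hC⟩ := ht.bddAbove_range
    exact ⟨C, fun n => hC ⟨n, rfl⟩⟩
  have hCpos : 0 ≤ C := le_trans (abs_nonneg _) (hC 0)
  -- continuity at 0
  have hH0 : Filter.Tendsto H (nhds 0) (nhds 0) := by
    have hbound : ∀ τ : ℂ, ‖τ‖ < 2⁻¹ → ‖H τ‖ ≤ C * ‖τ‖ * 2 := by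
      intro τ hτ
      rcases eq_or_ne τ 0 with rfl | hτ0
      · simp [hHdef,hCpos]
      · have hn : 0 < ‖τ‖ := norm_pos_iff.2 hτ0
        have hz : r < ‖τ⁻¹‖ := by
          rw [norm_inv]
          calc r < 1 := hr
            _ < ‖τ‖⁻¹ := by
              rw [lt_inv_comm₀ one_pos hn]; linarith
        have htv := (hsum τ⁻¹ hz).tsum_eq
        rw [hHval τ hτ0, ← htv]
        have hgeo : HasSum (fun n : ℕ => (C * ‖τ‖) * (1/2 : ℝ)^n) (C * ‖τ‖ * 2) :=
          hasSum_geometric_two.mul_left _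
        apply tsum_of_norm_bounded hgeo
        intro n
        have hzpow : ‖(τ⁻¹ : ℂ) ^ (-(n + 1 : ℤ))‖ = ‖τ‖^(n+1) := by
          rw [norm_zpow, norm_inv]
          rw [zpow_neg, ← inv_zpow, inv_inv,
            show ((n:ℤ)+1) = ((n+1:ℕ):ℤ) by push_cast; ring, zpow_natCast]
        rw [norm_mul, hzpow, Complex.norm_real]
        calc |a (n+1)| * ‖τ‖^(n+1) ≤ C * ‖τ‖^(n+1) := by
              apply mul_le_mul_of_nonneg_right (hC n) (by positivity)
          _ = C * (‖τ‖ * ‖τ‖^n) := by ring_nf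
          _ ≤ C * (‖τ‖ * (1/2:ℝ)^n) := by
              apply mul_le_mul_of_nonneg_left _ hCpos
              apply mul_le_mul_of_nonneg_left _ (norm_nonneg _)
              apply pow_le_pow_left₀ (norm_nonneg _) (by linarith)
          _ = (C * ‖τ‖) * (1/2:ℝ)^n := by ring
    have hg : Filter.Tendsto (fun τ : ℂ => C * ‖τ‖ * 2) (nhds 0) (nhds 0) := by
      have : Filter.Tendsto (fun τ : ℂ => C * ‖τ‖ * 2) (nhds 0) (nhds (C * ‖(0:ℂ)‖ * 2)) :=
        ((continuous_const.mul continuous_norm).mul continuous_const).tendsto 0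
      simpa using this
    have hev : ∀ᶠ τ : ℂ in nhds 0, ‖H τ‖ ≤ C * ‖τ‖ * 2 := by
      filter_upwards [Metric.ball_mem_nhds (0:ℂ) (by norm_num : (0:ℝ) < 2⁻¹)] with τ hτ
      exact hbound τ (by simpa [mem_ball_zero_iff] using hτ)
    exact squeeze_zero_norm' hev hg
  have hHdiffOn : ∀ τ ∈ ball (0:ℂ) R, DifferentiableAt ℂ H τ := by
    intro τ hτ
    rcases eq_or_ne τ 0 with rfl | hτ0
    · have : AnalyticAt ℂ H 0 := by
        apply Complex.analyticAt_of_differentiable_on_punctured_nhds_of_continuousAt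
        · filter_upwards [self_mem_nhdsWithin,
            mem_nhdsWithin_of_mem_nhds (isOpen_ball.mem_nhds (mem_ball_self (lt_trans one_pos hR)))] with z hz hz'
          exact hHdiffAt z hz' hz
        · have : H 0 = 0 := by simp [hHdef]
          rw [ContinuousAt, this]
          exact hH0
      exact this.differentiableAt
    · exact hHdiffAt τ hτ hτ0
  have hwR : w ∈ ball (0:ℂ) R := by rw [mem_ball_zero_iff, hw]; exact hR
  have hwiR : w⁻¹ ∈ ball (0:ℂ) R := by
    rw [mem_ball_zero_iff, norm_inv, hw]; simpa using hR
  have hHcont : ContinuousOn H (ball 0 R) :=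
    fun z hz => (hHdiffOn z hz).continuousAt.continuousWithinAt
  have hconj : ∀ z : ℂ, r < ‖z‖ → (starRingEnd ℂ) (h ((starRingEnd ℂ) z)) = h z := by
    intro z hz
    have h1 := hsum ((starRingEnd ℂ) z) (by rwa [RCLike.norm_conj])
    have h2 := h1.star
    have h3 : (fun n : ℕ => star (((a (n+1) : ℝ):ℂ) * ((starRingEnd ℂ) z) ^ (-(n+1:ℤ))))
        = fun n : ℕ => ((a (n+1):ℝ):ℂ) * z ^ (-(n+1:ℤ)) := by
      funext n
      rw [star_mul', ← starRingEnd_apply, ← starRingEnd_apply, map_zpow₀, Complex.conj_conj,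
        Complex.conj_ofReal]
    rw [h3] at h2
    have := h2.unique (hsum z hz)
    rw [starRingEnd_apply]
    push_cast at this ⊢
    exact this
  set G : ℂ → ℂ := dslope H w⁻¹ with hGdef
  set φ : ℂ → ℂ := fun τ => (2*I)⁻¹ • (dslope H w τ - (w⁻¹)^2 • ((τ⁻¹)^2 * G τ⁻¹)) with hφdef
  have keyEq : ∀ τ : ℂ, ‖τ‖ = 1 → τ ≠ w →
      ((((τ - w) * (h ((starRingEnd ℂ) τ) - h ((starRingEnd ℂ) w))).im : ℝ) : ℂ) / (τ - w)^2
        = φ τ := by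
    intro τ hτ hτw
    have hτ0 : τ ≠ 0 := by intro h0; rw [h0] at hτ; simp at hτ
    have hA : τ - w ≠ 0 := sub_ne_zero.2 hτw
    have hct : (starRingEnd ℂ) τ = τ⁻¹ := (Complex.inv_eq_conj hτ).symm
    have hcw : (starRingEnd ℂ) w = w⁻¹ := (Complex.inv_eq_conj hw).symm
    have hhτ : h ((starRingEnd ℂ) τ) = H τ := by rw [hct, ← hHval τ hτ0]
    have hhw : h ((starRingEnd ℂ) w) = H w := by rw [hcw, ← hHval w hw0]
    have hhτ' : h τ = H τ⁻¹ := by rw [hHval _ (inv_ne_zero hτ0), inv_inv]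
    have hhw' : h w = H w⁻¹ := by rw [hHval _ (inv_ne_zero hw0), inv_inv]
    set z : ℂ := (τ - w) * (h ((starRingEnd ℂ) τ) - h ((starRingEnd ℂ) w)) with hzdef
    have him : ((z.im : ℝ) : ℂ) = (z - (starRingEnd ℂ) z) / (2*I) := by
      rw [Complex.sub_conj]
      field_simp
      push_cast
      ring
    have hcz : (starRingEnd ℂ) z = (τ⁻¹ - w⁻¹) * (H τ⁻¹ - H w⁻¹) := by
      rw [hzdef, map_mul, map_sub, map_sub,
        hconj τ (by rw [hτ]; exact hr), hconj w (by rw [hw]; exact hr),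
        hct, hcw, hhτ', hhw']
    have d1 : H τ - H w = (τ - w) * dslope H w τ := by
      rw [← smul_eq_mul, sub_smul_dslope]
    have d2 : H τ⁻¹ - H w⁻¹ = (τ⁻¹ - w⁻¹) * G τ⁻¹ := by
      rw [hGdef, ← smul_eq_mul, sub_smul_dslope]
    have e : τ⁻¹ - w⁻¹ = -(τ - w) * τ⁻¹ * w⁻¹ := by
      field_simp
      ring
    have hI : (I:ℂ) ≠ 0 := Complex.I_ne_zero
    rw [him, hcz, hzdef, hhτ, hhw, d1, d2, e, hφdef]
    simp only [smul_eq_mul]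
    rw [div_div, div_eq_iff (mul_ne_zero (mul_ne_zero two_ne_zero hI) (pow_ne_zero 2 hA))]
    field_simp [hτ0, hw0]
  have hnorm1 : ∀ θ : ℝ, ‖circleMap 0 1 θ‖ = 1 := by
    intro θ; rw [norm_circleMap_zero]; norm_num
  have hae : ∀ᵐ θ : ℝ, circleMap 0 1 θ ≠ w := by
    have hcnt : (circleMap 0 1 ⁻¹' {w}).Countable :=
      (Set.countable_singleton w).preimage_circleMap 0 one_ne_zero
    rw [MeasureTheory.ae_iff]
    have hset : {θ : ℝ | ¬ circleMap 0 1 θ ≠ w} = circleMap 0 1 ⁻¹' {w} := by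
      ext θ; simp [not_not]
    rw [hset]
    exact hcnt.measure_zero _
  have step1 : (∮ τ in C(0,1),
      ((((τ - w) * (h ((starRingEnd ℂ) τ) - h ((starRingEnd ℂ) w))).im : ℝ) : ℂ) / (τ - w)^2)
      = ∮ τ in C(0,1), φ τ := by
    rw [circleIntegral, circleIntegral]
    apply intervalIntegral.integral_congr_ae
    filter_upwards [hae] with θ hθ _
    rw [keyEq _ (hnorm1 θ) hθ]
  have hcont1 : ContinuousOn (dslope H w) (closedBall 0 1) :=
    (((continuousOn_dslope (isOpen_ball.mem_nhds hwR)).2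
      ⟨hHcont, hHdiffOn w hwR⟩)).mono (closedBall_subset_ball hR)
  have hGcontR : ContinuousOn G (ball 0 R) :=
    (continuousOn_dslope (isOpen_ball.mem_nhds hwiR)).2 ⟨hHcont, hHdiffOn _ hwiR⟩
  have hGcont : ContinuousOn G (closedBall 0 1) := hGcontR.mono (closedBall_subset_ball hR)
  have hsphere_inv : ContinuousOn (fun τ : ℂ => τ⁻¹) (sphere (0:ℂ) 1) := by
    apply ContinuousOn.inv₀ continuousOn_id
    intro τ hτ
    rw [mem_sphere_zero_iff_norm] at hτ
    intro h0
    rw [id_eq] at h0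
    rw [h0] at hτ; simp at hτ
  have hmapsto : MapsTo (fun τ : ℂ => τ⁻¹) (sphere (0:ℂ) 1) (ball (0:ℂ) R) := by
    intro τ hτ
    rw [mem_sphere_zero_iff_norm] at hτ
    rw [mem_ball_zero_iff, norm_inv, hτ]
    simpa using hR
  have hcont2 : ContinuousOn (fun τ : ℂ => (w⁻¹)^2 • ((τ⁻¹)^2 * G τ⁻¹)) (sphere (0:ℂ) 1) :=
    ContinuousOn.smul (f := fun _ => (w⁻¹)^2) (g := fun τ : ℂ => (τ⁻¹)^2 * G τ⁻¹) continuousOn_const ((hsphere_inv.pow 2).mul (hGcontR.comp hsphere_inv hmapsto))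
  have int1 : CircleIntegrable (dslope H w) 0 1 :=
    (hcont1.mono sphere_subset_closedBall).circleIntegrable zero_le_one
  have int2 : CircleIntegrable (fun τ : ℂ => (w⁻¹)^2 • ((τ⁻¹)^2 * G τ⁻¹)) 0 1 :=
    hcont2.circleIntegrable zero_le_one
  have cauchy1 : (∮ τ in C(0,1), dslope H w τ) = 0 := by
    apply circleIntegral_eq_zero_of_differentiable_on_off_countable zero_le_one
      (Set.countable_singleton w) hcont1
    intro z hz
    have hzw : z ≠ w := by simpa using hz.2
    exact (differentiableAt_dslope_of_ne hzw).2 (hHdiffOn z (ball_subset_ball hR.le hz.1))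
  have cauchy2 : (∮ τ in C(0,1), G τ) = 0 := by
    apply circleIntegral_eq_zero_of_differentiable_on_off_countable zero_le_one
      (Set.countable_singleton w⁻¹) hGcont
    intro z hz
    have hzw : z ≠ w⁻¹ := by simpa using hz.2
    rw [hGdef]
    exact (differentiableAt_dslope_of_ne hzw).2 (hHdiffOn z (ball_subset_ball hR.le hz.1))
  have step2 : (∮ τ in C(0,1), φ τ) = 0 := by
    rw [hφdef]
    rw [circleIntegral.integral_smul (2*I)⁻¹
      (fun τ : ℂ => dslope H w τ - (w⁻¹)^2 • ((τ⁻¹)^2 * G τ⁻¹)) 0 1]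
    rw [circleIntegral.integral_sub int1 int2, cauchy1]
    rw [circleIntegral.integral_smul ((w⁻¹)^2) (fun τ : ℂ => (τ⁻¹)^2 * G τ⁻¹) 0 1]
    rw [inv_circleIntegral G, cauchy2]
    simp
  rw [circAvg, step1, step2, mul_zero]
end

section
/- Let f : 𝕋 → ℂ be Lipschitz with Lipschitz constant L, satisfying f(conj(w)) = conj(f(w)) for all w ∈ 𝕋 (i.e. f has real Fourier coefficients). Let ε ∈ ℝ with |ε| L < 1. Then for all τ ≠ w in 𝕋, the kernel K(τ, w) = [(τ − w)(f(conj(τ)) − f(conj(w))) − (conj(τ) − conj(w))(f(τ) − f(w))] / [(τ − w)((τ − w) + ε(f(τ) − f(w)))] is well defined and satisfies |K(τ, w)| ≤ 2L/(1 − |ε| L). -/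
theorem stmt16 (f : ℂ → ℂ) (L : ℝ)
    (hLip : ∀ x y : ℂ, ‖x‖ = 1 → ‖y‖ = 1 → ‖f x - f y‖ ≤ L * ‖x - y‖)
    (hreal : ∀ w : ℂ, ‖w‖ = 1 → f ((starRingEnd ℂ) w) = (starRingEnd ℂ) (f w))
    (ε : ℝ) (hε : |ε| * L < 1) :
    ∀ τ w : ℂ, ‖τ‖ = 1 → ‖w‖ = 1 → τ ≠ w →
      (τ - w) + (ε : ℂ) * (f τ - f w) ≠ 0 ∧
      ‖((τ - w) * (f ((starRingEnd ℂ) τ) - f ((starRingEnd ℂ) w)) -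
            ((starRingEnd ℂ) τ - (starRingEnd ℂ) w) * (f τ - f w)) /
          ((τ - w) * ((τ - w) + (ε : ℂ) * (f τ - f w)))‖ ≤
        2 * L / (1 - |ε| * L) := by
  intro τ w hτ hw hne
  have hL : 0 ≤ L := by
    have h := hLip 1 (-1) (by simp) (by simp)
    have : (0:ℝ) ≤ L * ‖(1:ℂ) - (-1)‖ := le_trans (norm_nonneg _) h
    have h2 : ‖(1:ℂ) - (-1)‖ = 2 := by norm_num
    nlinarith [this]
  have hd : 0 < ‖τ - w‖ := by
    simpa [sub_ne_zero] using (norm_pos_iff.mpr (sub_ne_zero.mpr hne))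
  have h1 : 0 < 1 - |ε| * L := by linarith
  have hf := hLip τ w hτ hw
  have hεf : ‖(ε : ℂ) * (f τ - f w)‖ ≤ |ε| * L * ‖τ - w‖ := by
    rw [norm_mul, Complex.norm_real, Real.norm_eq_abs, mul_assoc]
    exact mul_le_mul_of_nonneg_left hf (abs_nonneg ε)
  have hden : (1 - |ε| * L) * ‖τ - w‖ ≤ ‖(τ - w) + (ε : ℂ) * (f τ - f w)‖ := by
    have := norm_sub_norm_le (τ - w) (-((ε : ℂ) * (f τ - f w)))
    rw [sub_neg_eq_add] at this
    rw [norm_neg] at this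
    nlinarith [this, hεf]
  have hdenpos : 0 < ‖(τ - w) + (ε : ℂ) * (f τ - f w)‖ :=
    lt_of_lt_of_le (by positivity) hden
  refine ⟨norm_pos_iff.mp hdenpos, ?_⟩
  -- conj norms
  have hcτ : ‖(starRingEnd ℂ) τ‖ = 1 := by simpa using hτ
  have hcw : ‖(starRingEnd ℂ) w‖ = 1 := by simpa using hw
  have hcd : ‖(starRingEnd ℂ) τ - (starRingEnd ℂ) w‖ = ‖τ - w‖ := by
    rw [← map_sub]; exact RCLike.norm_conj _
  have hfc : ‖f ((starRingEnd ℂ) τ) - f ((starRingEnd ℂ) w)‖ ≤ L * ‖τ - w‖ := by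
    have := hLip ((starRingEnd ℂ) τ) ((starRingEnd ℂ) w) hcτ hcw
    rwa [hcd] at this
  have hnum : ‖(τ - w) * (f ((starRingEnd ℂ) τ) - f ((starRingEnd ℂ) w)) -
      ((starRingEnd ℂ) τ - (starRingEnd ℂ) w) * (f τ - f w)‖ ≤ 2 * L * ‖τ - w‖ ^ 2 := by
    calc ‖(τ - w) * (f ((starRingEnd ℂ) τ) - f ((starRingEnd ℂ) w)) -
        ((starRingEnd ℂ) τ - (starRingEnd ℂ) w) * (f τ - f w)‖
        ≤ ‖(τ - w) * (f ((starRingEnd ℂ) τ) - f ((starRingEnd ℂ) w))‖ +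
          ‖((starRingEnd ℂ) τ - (starRingEnd ℂ) w) * (f τ - f w)‖ := norm_sub_le _ _
      _ ≤ ‖τ - w‖ * (L * ‖τ - w‖) + ‖τ - w‖ * (L * ‖τ - w‖) := by
          rw [norm_mul, norm_mul, hcd]
          gcongr
      _ = 2 * L * ‖τ - w‖ ^ 2 := by ring
  rw [norm_div, norm_mul]
  rw [div_le_div_iff₀ (by positivity) h1]
  calc ‖(τ - w) * (f ((starRingEnd ℂ) τ) - f ((starRingEnd ℂ) w)) -
      ((starRingEnd ℂ) τ - (starRingEnd ℂ) w) * (f τ - f w)‖ * (1 - |ε| * L)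
      ≤ (2 * L * ‖τ - w‖ ^ 2) * (1 - |ε| * L) := by gcongr
    _ = (2 * L) * (‖τ - w‖ * ((1 - |ε| * L) * ‖τ - w‖)) := by ring
    _ ≤ (2 * L) * (‖τ - w‖ * ‖(τ - w) + (ε : ℂ) * (f τ - f w)‖) := by
        gcongr
end
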